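/- Let U = {(H, l_H) : ∅ ≠ H ⊆ V, l_H ∈ I_H*} and let x : U → ℝ be arbitrary. Define the square matrix A indexed by T × T with entries A((D,i_D),(C,j_C)) = [C ⊆ D and (i_D)_C = j_C] − Σ_{(H,l_H)∈U : C ⊆ H, (l_H)_C = j_C} x(H, l_H), where [·] denotes the indicator. Then det A = 1 − Σ_{(H,l_H)∈U} x(H, l_H) · Σ_{F∈𝒟, F⊆H} (−1)^{|F|−1}. -/

import Mathlib

open Finset MeasureTheory

/-- The cell equal to `i` on `F` and to the baseline `b` off `F`. -/
def cellOn {V : Type} [DecidableEq V] {I : V → Type} (b : ∀ γ, I γ)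
    (F : Finset V) (i : ∀ γ, I γ) : ∀ γ, I γ :=
  fun γ => if γ ∈ F then i γ else b γ

/-- The support of a cell: the set of coordinates that are off baseline. -/
def cellSupport {V : Type} [Fintype V] [DecidableEq V] {I : V → Type}
    [∀ γ, DecidableEq (I γ)] (b : ∀ γ, I γ) (j : ∀ γ, I γ) : Finset V :=
  Finset.univ.filter (fun γ => j γ ≠ b γ)

/-- A generating class: a nonempty collection of nonempty subsets of `V` closed
under nonempty subsets. -/
def IsGenClass {V : Type} [DecidableEq V] (𝒟 : Finset (Finset V)) : Prop :=
  𝒟.Nonempty ∧ (∀ D ∈ 𝒟, D ≠ ∅) ∧ ∀ D ∈ 𝒟, ∀ F ⊆ D, F ≠ ∅ → F ∈ 𝒟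

/-- The index set `T = {(D, i_D) : D ∈ 𝒟, i_D ∈ I_D*}`; a tuple `i_D ∈ I_D*` is
represented by the unique cell whose support is exactly `D`. -/
def TParam {V : Type} [Fintype V] [DecidableEq V] (I : V → Type)
    [∀ γ, DecidableEq (I γ)] (b : ∀ γ, I γ) (𝒟 : Finset (Finset V)) : Type :=
  {x : Finset V × (∀ γ, I γ) // x.1 ∈ 𝒟 ∧ cellSupport b x.2 = x.1}

noncomputable instance {V : Type} [Fintype V] [DecidableEq V] (I : V → Type)
    [∀ γ, Fintype (I γ)] [∀ γ, DecidableEq (I γ)] (b : ∀ γ, I γ)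
    (𝒟 : Finset (Finset V)) : Fintype (TParam I b 𝒟) := by
  unfold TParam; infer_instance

instance {V : Type} [Fintype V] [DecidableEq V] (I : V → Type)
    [∀ γ, DecidableEq (I γ)] (b : ∀ γ, I γ)
    (𝒟 : Finset (Finset V)) : DecidableEq (TParam I b 𝒟) := by
  unfold TParam; infer_instance

/-- The exponent `Σ_{F ∈ 𝒟, F ⊆ S(j)} θ(F, j_F)` of the hierarchical model. -/
noncomputable def energy {V : Type} [Fintype V] [DecidableEq V] {I : V → Type}
    [∀ γ, Fintype (I γ)] [∀ γ, DecidableEq (I γ)] (b : ∀ γ, I γ)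
    (𝒟 : Finset (Finset V)) (θ : TParam I b 𝒟 → ℝ) (j : ∀ γ, I γ) : ℝ :=
  ∑ t : TParam I b 𝒟, if t.1.2 = cellOn b t.1.1 j then θ t else 0

/-- The partition function `Z(θ)`. -/
noncomputable def Zfun {V : Type} [Fintype V] [DecidableEq V] {I : V → Type}
    [∀ γ, Fintype (I γ)] [∀ γ, DecidableEq (I γ)] (b : ∀ γ, I γ)
    (𝒟 : Finset (Finset V)) (θ : TParam I b 𝒟 → ℝ) : ℝ :=
  ∑ j : (∀ γ, I γ), Real.exp (energy b 𝒟 θ j)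

/-- The log-partition function `k(θ) = log Z(θ)`. -/
noncomputable def kfun {V : Type} [Fintype V] [DecidableEq V] {I : V → Type}
    [∀ γ, Fintype (I γ)] [∀ γ, DecidableEq (I γ)] (b : ∀ γ, I γ)
    (𝒟 : Finset (Finset V)) (θ : TParam I b 𝒟 → ℝ) : ℝ :=
  Real.log (Zfun b 𝒟 θ)

/-- The hierarchical log-linear probability function `p_θ`. -/
noncomputable def phier {V : Type} [Fintype V] [DecidableEq V] {I : V → Type}
    [∀ γ, Fintype (I γ)] [∀ γ, DecidableEq (I γ)] (b : ∀ γ, I γ)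
    (𝒟 : Finset (Finset V)) (θ : TParam I b 𝒟 → ℝ) (j : ∀ γ, I γ) : ℝ :=
  Real.exp (energy b 𝒟 θ j) / Zfun b 𝒟 θ

/-- The index set `U = {(H, l_H) : ∅ ≠ H ⊆ V, l_H ∈ I_H*}`; a tuple `l_H ∈ I_H*` is
represented by the unique cell whose support is exactly `H`. -/
def UParam {V : Type} [Fintype V] [DecidableEq V] (I : V → Type)
    [∀ γ, DecidableEq (I γ)] (b : ∀ γ, I γ) : Type :=
  {x : Finset V × (∀ γ, I γ) // x.1 ≠ ∅ ∧ cellSupport b x.2 = x.1}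

noncomputable instance {V : Type} [Fintype V] [DecidableEq V] (I : V → Type)
    [∀ γ, Fintype (I γ)] [∀ γ, DecidableEq (I γ)] (b : ∀ γ, I γ) :
    Fintype (UParam I b) := by
  unfold UParam; infer_instance
set_option linter.unusedSectionVars false

section Aux

variable {V : Type} [Fintype V] [DecidableEq V]
    {I : V → Type} [∀ γ, Fintype (I γ)] [∀ γ, DecidableEq (I γ)]
    (b : ∀ γ, I γ) (𝒟 : Finset (Finset V))

lemma support_ne {p : Finset V × (∀ γ, I γ)} (hp : cellSupport b p.2 = p.1)
    {γ : V} (h : γ ∈ p.1) : p.2 γ ≠ b γ := by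
  rw [← hp] at h; simpa [cellSupport] using h

lemma support_eq {p : Finset V × (∀ γ, I γ)} (hp : cellSupport b p.2 = p.1)
    {γ : V} (h : γ ∉ p.1) : p.2 γ = b γ := by
  rw [← hp] at h; simpa [cellSupport] using h

lemma TParam.ext' {t s : TParam I b 𝒟} (h1 : t.1.1 = s.1.1)
    (h2 : ∀ γ ∈ t.1.1, t.1.2 γ = s.1.2 γ) : t = s := by
  apply Subtype.ext
  apply Prod.ext h1
  funext γ
  by_cases hγ : γ ∈ t.1.1
  · exact h2 γ hγ
  · rw [support_eq b t.2.2 hγ, support_eq b s.2.2 (h1 ▸ hγ)]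

lemma cellSupport_cellOn (D : Finset V) (j : ∀ γ, I γ)
    (h : ∀ γ ∈ D, j γ ≠ b γ) : cellSupport b (cellOn b D j) = D := by
  ext γ
  by_cases hγ : γ ∈ D <;> simp [cellSupport, cellOn, hγ, h γ]

/-- Master reindexing lemma: a sum over `T` of terms supported on cells
that agree with `j` and have support in `𝒮` equals a sum over `𝒮`. -/
lemma sum_T_eq (j : ∀ γ, I γ) (𝒮 : Finset (Finset V))
    (h𝒮 : ∀ D ∈ 𝒮, D ∈ 𝒟 ∧ ∀ γ ∈ D, j γ ≠ b γ) (f : Finset V → ℝ) :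
    (∑ t : TParam I b 𝒟,
      if t.1.1 ∈ 𝒮 ∧ (∀ γ ∈ t.1.1, j γ = t.1.2 γ) then f t.1.1 else 0)
      = ∑ D ∈ 𝒮, f D := by
  classical
  rw [← Finset.sum_filter]
  refine Finset.sum_bij' (fun t _ => t.1.1)
    (fun D hD => (⟨(D, cellOn b D j), (h𝒮 D hD).1,
      cellSupport_cellOn b D j (h𝒮 D hD).2⟩ : TParam I b 𝒟))
    ?_ ?_ ?_ ?_ ?_
  · intro t ht
    exact ((Finset.mem_filter.1 ht).2).1
  · intro D hD
    refine Finset.mem_filter.2 ⟨Finset.mem_univ _, ?_⟩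
    refine ⟨hD, fun γ hγ => ?_⟩
    simp [cellOn, hγ]
  · intro t ht
    have hag := ((Finset.mem_filter.1 ht).2).2
    refine TParam.ext' b 𝒟 rfl fun γ hγ => ?_
    simp only [cellOn, hγ, if_pos]
    exact hag γ hγ
  · intro D hD
    rfl
  · intro t ht
    rfl

/-- The alternating sum over an interval of finsets. -/
lemma sum_Icc_neg_one_pow {a c : Finset V} (h : a ⊆ c) :
    (∑ S ∈ Finset.Icc a c, (-1 : ℝ) ^ (S.card - a.card))
      = if c = a then 1 else 0 := by
  classical
  have key : (∑ S ∈ Finset.Icc a c, (-1 : ℝ) ^ (S.card - a.card))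
      = ∑ R ∈ (c \ a).powerset, (-1 : ℝ) ^ R.card := by
    refine Finset.sum_bij' (fun S _ => S \ a) (fun R _ => R ∪ a) ?_ ?_ ?_ ?_ ?_
    · intro S hS
      rw [Finset.mem_Icc] at hS
      exact Finset.mem_powerset.2 (Finset.sdiff_subset_sdiff hS.2 le_rfl)
    · intro R hR
      rw [Finset.mem_powerset] at hR
      rw [Finset.mem_Icc]
      constructor
      · exact Finset.le_iff_subset.2 (Finset.subset_union_right)
      · refine Finset.le_iff_subset.2 (Finset.union_subset ?_ h)
        exact hR.trans (Finset.sdiff_subset)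
    · intro S hS
      rw [Finset.mem_Icc] at hS
      show S \ a ∪ a = S
      exact Finset.sdiff_union_of_subset hS.1
    · intro R hR
      rw [Finset.mem_powerset] at hR
      have hd : Disjoint R a := by
        refine Finset.disjoint_left.2 fun x hx hxa => ?_
        exact (Finset.mem_sdiff.1 (hR hx)).2 hxa
      show (R ∪ a) \ a = R
      rw [Finset.union_sdiff_distrib, Finset.sdiff_self, Finset.union_empty,
        Finset.sdiff_eq_self_of_disjoint hd]
    · intro S hS
      rw [Finset.mem_Icc] at hS
      rw [Finset.card_sdiff_of_subset hS.1]
  rw [key]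
  have := Finset.sum_powerset_neg_one_pow_card (x := c \ a)
  have hcast : (∑ R ∈ (c \ a).powerset, (-1 : ℝ) ^ R.card)
      = ((∑ R ∈ (c \ a).powerset, (-1 : ℤ) ^ R.card : ℤ) : ℝ) := by
    push_cast; rfl
  rw [hcast, this]
  by_cases hca : c = a
  · simp [hca]
  · have : c \ a ≠ ∅ := by
      intro hh
      exact hca (Finset.Subset.antisymm (by
        intro x hx
        by_contra hxa
        exact absurd (Finset.mem_sdiff.2 ⟨hx, hxa⟩) (by simp [hh])) h)
    simp [this, hca]

end Aux
section Aux2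

variable {V : Type} [Fintype V] [DecidableEq V]
    {I : V → Type} [∀ γ, Fintype (I γ)] [∀ γ, DecidableEq (I γ)]
    (b : ∀ γ, I γ) (𝒟 : Finset (Finset V))

/-- The partial order relation on `T`: `TRel c t` iff `c.1 ⊆ t.1` and the cells agree on `c.1`. -/
def TRel (c t : TParam I b 𝒟) : Prop :=
  c.1.1 ⊆ t.1.1 ∧ ∀ γ ∈ c.1.1, t.1.2 γ = c.1.2 γ

instance (c t : TParam I b 𝒟) : Decidable (TRel b 𝒟 c t) := by
  unfold TRel; infer_instance

lemma trel_refl (t : TParam I b 𝒟) : TRel b 𝒟 t t :=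
  ⟨Finset.Subset.refl _, fun _ _ => rfl⟩

lemma trel_trans {c s t : TParam I b 𝒟} (h1 : TRel b 𝒟 c s) (h2 : TRel b 𝒟 s t) :
    TRel b 𝒟 c t :=
  ⟨h1.1.trans h2.1, fun γ hγ => (h2.2 γ (h1.1 hγ)).trans (h1.2 γ hγ)⟩

/-- The zeta matrix `B`. -/
def Bmat : Matrix (TParam I b 𝒟) (TParam I b 𝒟) ℝ :=
  Matrix.of fun t c => if TRel b 𝒟 c t then (1 : ℝ) else 0

/-- The Möbius matrix `M`. -/
def Mmat : Matrix (TParam I b 𝒟) (TParam I b 𝒟) ℝ :=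
  Matrix.of fun t c => if TRel b 𝒟 c t then (-1 : ℝ) ^ (t.1.1.card - c.1.1.card) else 0

lemma B_mul_M (h𝒟 : IsGenClass 𝒟) : Bmat b 𝒟 * Mmat b 𝒟 = 1 := by
  classical
  ext t c
  rw [Matrix.mul_apply]
  have hterm : ∀ s, Bmat b 𝒟 t s * Mmat b 𝒟 s c
      = if TRel b 𝒟 s t ∧ TRel b 𝒟 c s then (-1 : ℝ) ^ (s.1.1.card - c.1.1.card) else 0 := by
    intro s
    by_cases h1 : TRel b 𝒟 s t <;> by_cases h2 : TRel b 𝒟 c s <;>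
      simp [Bmat, Mmat, h1, h2]
  rw [Finset.sum_congr rfl fun s _ => hterm s]
  by_cases h : TRel b 𝒟 c t
  · have hiff : ∀ s : TParam I b 𝒟, (TRel b 𝒟 s t ∧ TRel b 𝒟 c s) ↔
        (s.1.1 ∈ Finset.Icc c.1.1 t.1.1 ∧ ∀ γ ∈ s.1.1, t.1.2 γ = s.1.2 γ) := by
      intro s
      constructor
      · rintro ⟨h1, h2⟩
        exact ⟨Finset.mem_Icc.2 ⟨Finset.le_iff_subset.2 h2.1, Finset.le_iff_subset.2 h1.1⟩, h1.2⟩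
      · rintro ⟨hm, hag⟩
        rw [Finset.mem_Icc] at hm
        exact ⟨⟨hm.2, hag⟩, hm.1,
          fun γ hγ => (hag γ (hm.1 hγ)).symm.trans (h.2 γ hγ)⟩
    have h𝒮 : ∀ D ∈ Finset.Icc c.1.1 t.1.1, D ∈ 𝒟 ∧ ∀ γ ∈ D, t.1.2 γ ≠ b γ := by
      intro D hD
      rw [Finset.mem_Icc] at hD
      refine ⟨h𝒟.2.2 t.1.1 t.2.1 D hD.2 ?_, fun γ hγ => support_ne b t.2.2 (hD.2 hγ)⟩
      intro hDe
      exact h𝒟.2.1 c.1.1 c.2.1 (Finset.subset_empty.1 (hDe ▸ hD.1))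
    rw [Finset.sum_congr rfl fun s _ =>
      if_congr (hiff s) rfl rfl]
    rw [sum_T_eq b 𝒟 t.1.2 (Finset.Icc c.1.1 t.1.1) h𝒮
      (fun S => (-1 : ℝ) ^ (S.card - c.1.1.card))]
    rw [sum_Icc_neg_one_pow h.1, Matrix.one_apply]
    by_cases he : t = c
    · simp [he]
    · have hne : t.1.1 ≠ c.1.1 := by
        intro hh
        exact he (TParam.ext' b 𝒟 hh (fun γ hγ => h.2 γ (hh ▸ hγ)))
      simp [he, hne]
  · have hz : ∀ s : TParam I b 𝒟, ¬(TRel b 𝒟 s t ∧ TRel b 𝒟 c s) := by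
      rintro s ⟨h1, h2⟩
      exact h (trel_trans b 𝒟 h2 h1)
    have htc : t ≠ c := by
      intro he
      exact h (he ▸ trel_refl b 𝒟 c)
    simp [hz, Matrix.one_apply, htc]

lemma det_Bmat (h𝒟 : IsGenClass 𝒟) : (Bmat b 𝒟).det = 1 := by
  classical
  have hbt : (Bmat b 𝒟).BlockTriangular (fun t => -(t.1.1.card : ℤ)) := by
    intro i j hij
    simp only [neg_lt_neg_iff, Nat.cast_lt] at hij
    simp only [Bmat, Matrix.of_apply, ite_eq_right_iff]
    intro hrel
    exact absurd (Finset.card_le_card hrel.1) (by omega)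
  rw [hbt.det]
  refine Finset.prod_eq_one fun a _ => ?_
  have hblock : (Bmat b 𝒟).toSquareBlock (fun t => -(t.1.1.card : ℤ)) a = 1 := by
    ext i j
    rw [Matrix.toSquareBlock_def]
    by_cases hij : i = j
    · simp [hij, Bmat, Matrix.one_apply, trel_refl]
    · have hcard : (j : TParam I b 𝒟).1.1.card = (i : TParam I b 𝒟).1.1.card := by
        have hi : -((i : TParam I b 𝒟).1.1.card : ℤ) = a := i.2
        have hj : -((j : TParam I b 𝒟).1.1.card : ℤ) = a := j.2
        have : -((j : TParam I b 𝒟).1.1.card : ℤ) = -((i : TParam I b 𝒟).1.1.card : ℤ) := by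
          rw [hi, hj]
        omega
      have hz : Bmat b 𝒟 (i : TParam I b 𝒟) (j : TParam I b 𝒟) = 0 := by
        simp only [Bmat, Matrix.of_apply, ite_eq_right_iff]
        intro hrel
        exfalso
        apply hij
        apply Subtype.ext
        have heq : (j : TParam I b 𝒟).1.1 = (i : TParam I b 𝒟).1.1 :=
          Finset.eq_of_subset_of_card_le hrel.1 (le_of_eq hcard.symm)
        exact TParam.ext' b 𝒟 heq.symm (fun γ hγ => hrel.2 γ (by rw [heq]; exact hγ))
      simp only [Matrix.of_apply, hz, Matrix.one_apply_ne hij]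
  rw [hblock, Matrix.det_one]

lemma g_eq (h𝒟 : IsGenClass 𝒟) {D : Finset V} (hD : D ∈ 𝒟) :
    (∑ C ∈ 𝒟.filter (· ⊆ D), (-1 : ℝ) ^ (D.card - C.card)) = (-1 : ℝ) ^ (D.card - 1) := by
  classical
  have hDne : D ≠ ∅ := h𝒟.2.1 D hD
  have hfil : 𝒟.filter (· ⊆ D) = D.powerset.filter (· ≠ ∅) := by
    ext C
    simp only [Finset.mem_filter, Finset.mem_powerset]
    constructor
    · rintro ⟨hC𝒟, hCD⟩
      exact ⟨hCD, h𝒟.2.1 C hC𝒟⟩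
    · rintro ⟨hCD, hCne⟩
      exact ⟨h𝒟.2.2 D hD C hCD hCne, hCD⟩
  have hfull : (∑ C ∈ D.powerset, (-1 : ℝ) ^ (D.card - C.card)) = 0 := by
    have hre : (∑ C ∈ D.powerset, (-1 : ℝ) ^ (D.card - C.card))
        = ∑ C ∈ D.powerset, (-1 : ℝ) ^ C.card := by
      refine Finset.sum_bij' (fun C _ => D \ C) (fun C _ => D \ C) ?_ ?_ ?_ ?_ ?_
      · intro C _; exact Finset.mem_powerset.2 (Finset.sdiff_subset)
      · intro C _; exact Finset.mem_powerset.2 (Finset.sdiff_subset)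
      · intro C hC
        exact Finset.sdiff_sdiff_eq_self (Finset.mem_powerset.1 hC)
      · intro C hC
        exact Finset.sdiff_sdiff_eq_self (Finset.mem_powerset.1 hC)
      · intro C hC
        rw [Finset.card_sdiff_of_subset (Finset.mem_powerset.1 hC)]
    rw [hre]
    have := Finset.sum_powerset_neg_one_pow_card_of_nonempty
      (Finset.nonempty_iff_ne_empty.2 hDne) (x := D)
    have hcast : (∑ C ∈ D.powerset, (-1 : ℝ) ^ C.card)
        = ((∑ C ∈ D.powerset, (-1 : ℤ) ^ C.card : ℤ) : ℝ) := by push_cast; rfl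
    rw [hcast, this]; simp
  have split := Finset.sum_filter_add_sum_filter_not D.powerset (· ≠ ∅)
    (fun C => (-1 : ℝ) ^ (D.card - C.card))
  have h2 : D.powerset.filter (fun C => ¬ C ≠ ∅) = {∅} := by
    ext C
    simp only [Finset.mem_filter, Finset.mem_powerset, not_not, Finset.mem_singleton]
    constructor
    · rintro ⟨_, hC⟩; exact hC
    · rintro rfl; exact ⟨Finset.empty_subset _, rfl⟩
  rw [h2, hfull, Finset.sum_singleton] at split
  have hc1 : D.card - 1 + 1 = D.card :=
    Nat.succ_pred_eq_of_pos (Finset.card_pos.2 (Finset.nonempty_iff_ne_empty.2 hDne))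
  have hpow : (-1 : ℝ) ^ D.card = -(-1 : ℝ) ^ (D.card - 1) := by
    conv_lhs => rw [← hc1]
    rw [pow_succ]; ring
  rw [hfil]
  simp only [Finset.card_empty, Nat.sub_zero] at split
  rw [hpow] at split
  linarith

end Aux2

/-- The determinant of the matrix `A` with entries
`A((D,i_D),(C,j_C)) = [C ⊆ D ∧ (i_D)_C = j_C] − Σ_{(H,l_H)∈U : C⊆H, (l_H)_C=j_C} x(H,l_H)`
equals `1 − Σ_{(H,l_H)∈U} x(H,l_H) Σ_{F∈𝒟, F⊆H} (−1)^{|F|−1}`. -/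
theorem det_A_eq {V : Type} [Fintype V] [DecidableEq V]
    {I : V → Type} [∀ γ, Fintype (I γ)] [∀ γ, DecidableEq (I γ)]
    (b : ∀ γ, I γ) (𝒟 : Finset (Finset V)) (h𝒟 : IsGenClass 𝒟)
    (x : UParam I b → ℝ) :
    Matrix.det (Matrix.of (fun (t c : TParam I b 𝒟) =>
      (if c.1.1 ⊆ t.1.1 ∧ (∀ γ ∈ c.1.1, t.1.2 γ = c.1.2 γ) then (1 : ℝ) else 0) -
        ∑ u : UParam I b,
          if c.1.1 ⊆ u.1.1 ∧ (∀ γ ∈ c.1.1, u.1.2 γ = c.1.2 γ) then x u else 0))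
    = 1 - ∑ u : UParam I b, x u * ∑ F ∈ 𝒟.filter (· ⊆ u.1.1), (-1 : ℝ) ^ (F.card - 1) := by
  classical
  set y : TParam I b 𝒟 → ℝ := fun c => ∑ u : UParam I b,
    if c.1.1 ⊆ u.1.1 ∧ (∀ γ ∈ c.1.1, u.1.2 γ = c.1.2 γ) then x u else 0 with hy
  have hA : (Matrix.of (fun (t c : TParam I b 𝒟) =>
      (if c.1.1 ⊆ t.1.1 ∧ (∀ γ ∈ c.1.1, t.1.2 γ = c.1.2 γ) then (1 : ℝ) else 0) -
        ∑ u : UParam I b,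
          if c.1.1 ⊆ u.1.1 ∧ (∀ γ ∈ c.1.1, u.1.2 γ = c.1.2 γ) then x u else 0))
      = Bmat b 𝒟 - Matrix.replicateCol Unit (fun _ => (1 : ℝ)) * Matrix.replicateRow Unit y := by
    ext t c
    simp [Bmat, TRel, Matrix.mul_apply, hy]
  rw [hA]
  have hBM := B_mul_M b 𝒟 h𝒟
  set w : TParam I b 𝒟 → ℝ := Matrix.mulVec (Mmat b 𝒟) (fun _ => 1) with hw
  have hfac : Bmat b 𝒟 - Matrix.replicateCol Unit (fun _ => (1 : ℝ)) * Matrix.replicateRow Unit y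
      = Bmat b 𝒟 * (1 - Matrix.replicateCol Unit w * Matrix.replicateRow Unit y) := by
    have hcol := Matrix.replicateCol_mulVec (ι := Unit) (Mmat b 𝒟) (fun _ => (1 : ℝ))
    rw [← hw] at hcol
    rw [Matrix.mul_sub, Matrix.mul_one, hcol, ← Matrix.mul_assoc,
      ← Matrix.mul_assoc, hBM, Matrix.one_mul]
  rw [hfac, Matrix.det_mul, det_Bmat b 𝒟 h𝒟, one_mul]
  have hdet1 : (1 - Matrix.replicateCol Unit w * Matrix.replicateRow Unit y).det = 1 - dotProduct y w := by
    have hneg : Matrix.replicateCol Unit (-w) = -Matrix.replicateCol Unit w := by ext i j; rfl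
    have h := Matrix.det_one_add_replicateCol_mul_replicateRow (ι := Unit) (-w) y
    rw [hneg, Matrix.neg_mul, ← sub_eq_add_neg, dotProduct_neg,
      ← sub_eq_add_neg] at h
    exact h
  rw [hdet1]
  congr 1
  have hwg : ∀ t : TParam I b 𝒟, w t
      = ∑ C ∈ 𝒟.filter (· ⊆ t.1.1), (-1 : ℝ) ^ (t.1.1.card - C.card) := by
    intro t
    show (∑ c : TParam I b 𝒟, Mmat b 𝒟 t c * 1) = _
    simp only [mul_one, Mmat, Matrix.of_apply]
    have hcond : ∀ c : TParam I b 𝒟,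
        (if TRel b 𝒟 c t then (-1 : ℝ) ^ (t.1.1.card - c.1.1.card) else 0)
        = if c.1.1 ∈ 𝒟.filter (· ⊆ t.1.1) ∧ (∀ γ ∈ c.1.1, t.1.2 γ = c.1.2 γ)
            then (fun S => (-1 : ℝ) ^ (t.1.1.card - S.card)) c.1.1 else 0 := by
      intro c
      refine if_congr ?_ rfl rfl
      unfold TRel
      simp only [Finset.mem_filter, c.2.1, true_and]
    rw [Finset.sum_congr rfl fun c _ => hcond c]
    exact sum_T_eq b 𝒟 t.1.2 (𝒟.filter (· ⊆ t.1.1)) (fun D hD => ⟨(Finset.mem_filter.1 hD).1,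
      fun γ hγ => support_ne b t.2.2 ((Finset.mem_filter.1 hD).2 hγ)⟩)
      (fun S => (-1 : ℝ) ^ (t.1.1.card - S.card))
  show (∑ t : TParam I b 𝒟, y t * w t) = _
  have hswap : (∑ t : TParam I b 𝒟, y t * w t)
      = ∑ u : UParam I b, x u * ∑ t : TParam I b 𝒟,
          (if t.1.1 ⊆ u.1.1 ∧ (∀ γ ∈ t.1.1, u.1.2 γ = t.1.2 γ) then w t else 0) := by
    simp only [hy, Finset.sum_mul, ite_mul, zero_mul]
    rw [Finset.sum_comm]
    refine Finset.sum_congr rfl fun u _ => ?_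
    rw [Finset.mul_sum]
    refine Finset.sum_congr rfl fun t _ => ?_
    by_cases hput : t.1.1 ⊆ u.1.1 ∧ (∀ γ ∈ t.1.1, u.1.2 γ = t.1.2 γ) <;>
      simp [hput, mul_comm]
  rw [hswap]
  refine Finset.sum_congr rfl fun u _ => ?_
  congr 1
  have hcond2 : ∀ t : TParam I b 𝒟,
      (if t.1.1 ⊆ u.1.1 ∧ (∀ γ ∈ t.1.1, u.1.2 γ = t.1.2 γ) then w t else 0)
      = if t.1.1 ∈ 𝒟.filter (· ⊆ u.1.1) ∧ (∀ γ ∈ t.1.1, u.1.2 γ = t.1.2 γ)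
          then (fun D => ∑ C ∈ 𝒟.filter (· ⊆ D), (-1 : ℝ) ^ (D.card - C.card)) t.1.1
          else 0 := by
    intro t
    refine if_congr ?_ (hwg t) rfl
    simp only [Finset.mem_filter, t.2.1, true_and]
  rw [Finset.sum_congr rfl fun t _ => hcond2 t]
  rw [sum_T_eq b 𝒟 u.1.2 (𝒟.filter (· ⊆ u.1.1)) (fun D hD => ⟨(Finset.mem_filter.1 hD).1,
    fun γ hγ => support_ne b u.2.2 ((Finset.mem_filter.1 hD).2 hγ)⟩)
    (fun D => ∑ C ∈ 𝒟.filter (· ⊆ D), (-1 : ℝ) ^ (D.card - C.card))]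
  refine Finset.sum_congr rfl fun F hF => ?_
  exact g_eq (𝒟 := 𝒟) h𝒟 (Finset.mem_filter.1 hF).1
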